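/- For n ≥ 2, the (2n+1)×(2n+1) matrix X with x_{i,i} = 2n/(2n+1) and x_{i, i+n mod 2n+1} = 1/(2n+1) (indices modulo 2n+1) and all other entries 0 is a vertex of the restricted Birkhoff polytope B_{2n+1}^{2n}; consequently, the denominators of vertices of restricted Birkhoff polytopes are unbounded. -/

import Mathlib

open scoped BigOperators
open Fin.NatCast Fin.CommRing

/-- A monotone lattice path in the `n × n` grid from `(0,0)` to `(n-1,n-1)` (0-indexed). -/
def IsLatticePath (n : ℕ) (p : ℕ → ℕ × ℕ) : Prop :=
  p 0 = (0, 0) ∧ p (2 * n - 2) = (n - 1, n - 1) ∧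
    ∀ i, i < 2 * n - 2 →
      p (i + 1) = ((p i).1 + 1, (p i).2) ∨ p (i + 1) = ((p i).1, (p i).2 + 1)

/-- Entry of a matrix at a ℕ-indexed position (0 outside the index range). -/
def ent {n : ℕ} (X : Matrix (Fin n) (Fin n) ℝ) (q : ℕ × ℕ) : ℝ :=
  if h : q.1 < n ∧ q.2 < n then X ⟨q.1, h.1⟩ ⟨q.2, h.2⟩ else 0

/-- Sum of matrix entries along a lattice path. -/
def pathSum {n : ℕ} (X : Matrix (Fin n) (Fin n) ℝ) (p : ℕ → ℕ × ℕ) : ℝ :=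
  ∑ i ∈ Finset.range (2 * n - 1), ent X (p i)

/-- Membership in the restricted Birkhoff polytope `B_n^k`. -/
def InRestrictedBirkhoff (n k : ℕ) (X : Matrix (Fin n) (Fin n) ℝ) : Prop :=
  (∀ i j, 0 ≤ X i j) ∧ (∀ i, ∑ j, X i j = 1) ∧ (∀ j, ∑ i, X i j = 1) ∧
    ∀ p : ℕ → ℕ × ℕ, IsLatticePath n p → pathSum X p ≤ k

/-- A real matrix with all entries integers. -/
def IsIntegerMatrix {n : ℕ} (X : Matrix (Fin n) (Fin n) ℝ) : Prop :=
  ∀ i j, ∃ m : ℤ, X i j = (m : ℝ)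

namespace BigDenom

lemma mod_two_cases (a b : ℕ) (h : a < 2*b) (hb : 0 < b) :
    (a < b ∧ a % b = a) ∨ (b ≤ a ∧ a % b = a - b) := by
  by_cases h1 : a < b
  · exact Or.inl ⟨h1, Nat.mod_eq_of_lt h1⟩
  · exact Or.inr ⟨by omega, by rw [Nat.mod_eq_sub_mod (by omega), Nat.mod_eq_of_lt (by omega)]⟩

lemma sum_two {N : ℕ} (u v : Fin N) (huv : u ≠ v) (A B : ℝ)
    (f : Fin N → ℝ) (hf : ∀ x, f x = if x = u then A else if x = v then B else 0) :
    ∑ x, f x = A + B := by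
  have key : ∀ x, f x = (if x = u then A else 0) + (if x = v then B else 0) := by
    intro x
    rw [hf x]
    by_cases h1 : x = u
    · subst h1; rw [if_pos rfl, if_pos rfl, if_neg huv, add_zero]
    · rw [if_neg h1, if_neg h1, zero_add]
  rw [Finset.sum_congr rfl (fun x _ => key x), Finset.sum_add_distrib]
  simp


variable {n : ℕ} {p : ℕ → ℕ × ℕ}

lemma path_unfold' (hp : IsLatticePath (2*n+1) p) :
    p 0 = (0,0) ∧ p (4*n) = (2*n, 2*n) ∧
    ∀ i, i < 4*n → p (i+1) = ((p i).1 + 1, (p i).2) ∨ p (i+1) = ((p i).1, (p i).2 + 1) := by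
  obtain ⟨h0, hend, hstep⟩ := hp
  have e : 2*(2*n+1)-2 = 4*n := by omega
  have e2 : 2*n+1-1 = 2*n := by omega
  rw [e, e2] at hend
  rw [e] at hstep
  exact ⟨h0, hend, hstep⟩

lemma path_level (hp : IsLatticePath (2*n+1) p) : ∀ i ≤ 4*n, (p i).1 + (p i).2 = i := by
  obtain ⟨h0, hend, hstep⟩ := path_unfold' hp
  intro i
  induction i with
  | zero => intro _; rw [h0]; rfl
  | succ i ih =>
    intro hi
    rcases hstep i (by omega) with h | h <;> rw [h] <;> simp <;> have := ih (by omega) <;> omega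

lemma path_mono (hp : IsLatticePath (2*n+1) p) :
    ∀ k i, (p i).1 ≤ (p (i+k)).1 ∧ (p i).2 ≤ (p (i+k)).2 ∨ 4*n < i + k := by
  obtain ⟨h0, hend, hstep⟩ := path_unfold' hp
  intro k
  induction k with
  | zero => intro i; left; exact ⟨le_refl _, le_refl _⟩
  | succ k ih =>
    intro i
    rcases ih i with h | h
    · by_cases hik : i + k < 4*n
      · left
        rcases hstep (i+k) hik with hs | hs <;>
          · have : i + (k+1) = (i+k)+1 := by omega
            rw [this, hs]; simp; omega
      · right; omega
    · right; omega

lemma path_bound (hp : IsLatticePath (2*n+1) p) :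
    ∀ i ≤ 4*n, (p i).1 ≤ 2*n ∧ (p i).2 ≤ 2*n := by
  obtain ⟨h0, hend, hstep⟩ := path_unfold' hp
  intro i hi
  rcases path_mono hp (4*n - i) i with h | h
  · have : i + (4*n - i) = 4*n := by omega
    rw [this, hend] at h
    exact h
  · omega

def dd (p : ℕ → ℕ × ℕ) (i : ℕ) : ℤ := ((p i).2 : ℤ) - ((p i).1 : ℤ)

lemma dd_step (hp : IsLatticePath (2*n+1) p) :
    ∀ i < 4*n, dd p (i+1) = dd p i + 1 ∨ dd p (i+1) = dd p i - 1 := by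
  obtain ⟨h0, hend, hstep⟩ := path_unfold' hp
  intro i hi
  rcases hstep i hi with h | h <;> [right; left] <;> rw [dd, h] <;> push_cast <;> simp [dd] <;> ring

lemma dd_zero (hp : IsLatticePath (2*n+1) p) : dd p 0 = 0 := by
  rw [dd, (path_unfold' hp).1]; rfl

lemma dd_end (hp : IsLatticePath (2*n+1) p) : dd p (4*n) = 0 := by
  rw [dd, (path_unfold' hp).2.1]; simp

lemma dd_parity (hp : IsLatticePath (2*n+1) p) : ∀ i ≤ 4*n, dd p i % 2 = (i : ℤ) % 2 := by
  intro i
  induction i with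
  | zero => intro _; rw [dd_zero hp]; rfl
  | succ i ih =>
    intro hi
    have := ih (by omega)
    rcases dd_step hp i (by omega) with h | h <;> rw [h] <;> push_cast <;> omega

lemma dd_lip (hp : IsLatticePath (2*n+1) p) :
    ∀ k i, i + k ≤ 4*n → |dd p (i+k) - dd p i| ≤ (k : ℤ) := by
  intro k
  induction k with
  | zero => intro i _; simp
  | succ k ih =>
    intro i hi
    have h1 := ih i (by omega)
    have h2 := dd_step hp (i+k) (by omega)
    have e : i + (k+1) = (i+k)+1 := by omega
    rw [e]
    rw [abs_le] at h1 ⊢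
    rcases h2 with h | h <;> rw [h] <;> push_cast <;> omega

noncomputable def Xmat (n : ℕ) : Matrix (Fin (2*n+1)) (Fin (2*n+1)) ℝ :=
  Matrix.of fun i j : Fin (2*n+1) =>
    if (j : ℕ) = (i : ℕ) then (2 * n : ℝ) / (2 * n + 1)
    else if (j : ℕ) = ((i : ℕ) + n) % (2 * n + 1) then 1 / (2 * n + 1) else 0

lemma xmat_entry (n : ℕ) (hn : 2 ≤ n) (r c : ℕ) (hr : r ≤ 2*n) (hc : c ≤ 2*n) :
    ent (Xmat n) (r, c) =
      if (c : ℤ) - r = 0 then (2 * n : ℝ) / (2 * n + 1)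
      else if (c : ℤ) - r = n ∨ (c : ℤ) - r = -(n+1) then 1 / (2 * n + 1) else 0 := by
  rw [ent]
  rw [dif_pos (by constructor <;> simp <;> omega)]
  show (if c = r then (2 * n : ℝ) / (2 * n + 1)
      else if c = (r + n) % (2 * n + 1) then 1 / (2 * n + 1) else 0) = _
  have hmod : (r + n < 2*n+1 ∧ (r + n) % (2*n+1) = r + n) ∨
      (2*n+1 ≤ r + n ∧ (r + n) % (2*n+1) = r + n - (2*n+1)) := by
    by_cases h : r + n < 2*n+1
    · exact Or.inl ⟨h, Nat.mod_eq_of_lt h⟩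
    · refine Or.inr ⟨by omega, ?_⟩
      rw [Nat.mod_eq_sub_mod (by omega), Nat.mod_eq_of_lt (by omega)]
  have e1 : (c = r) ↔ ((c:ℤ) - r = 0) := by omega
  have e2 : (c = (r + n) % (2*n+1)) ↔ ((c:ℤ) - r = n ∨ (c:ℤ) - r = -(n+1)) := by
    rcases hmod with ⟨h1, h2⟩ | ⟨h1, h2⟩ <;> rw [h2] <;> omega
  simp only [e1, e2]

lemma xmat_pathSum (hn : 2 ≤ n) (hp : IsLatticePath (2*n+1) p) :
    pathSum (Xmat n) p ≤ (2*n : ℝ) := by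
  classical
  have hm : (0:ℝ) < 2*(n:ℝ)+1 := by positivity
  set d := dd p with hd
  have dz : d 0 = 0 := dd_zero hp
  have dend : d (4*n) = 0 := dd_end hp
  have hrange : 2*(2*n+1) - 1 = 4*n+1 := by omega
  have hsum : pathSum (Xmat n) p = ∑ i ∈ Finset.range (4*n+1),
      (if d i = 0 then (2*n:ℝ)/(2*n+1)
        else if d i = (n:ℤ) ∨ d i = -((n:ℤ)+1) then (1:ℝ)/(2*(n:ℝ)+1) else 0) := by
    rw [pathSum, hrange]
    refine Finset.sum_congr rfl ?_
    intro i hi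
    rw [Finset.mem_range] at hi
    have hb := path_bound hp i (by omega)
    have hpi : p i = ((p i).1, (p i).2) := rfl
    rw [hpi, xmat_entry n hn _ _ hb.1 hb.2]
    rfl
  set F := Finset.range (4*n+1) with hF
  set D := F.filter (fun i => d i = 0) with hDdef
  set S := F.filter (fun i => d i = (n:ℤ) ∨ d i = -((n:ℤ)+1)) with hSdef
  have hsplit : (∑ i ∈ F, (if d i = 0 then (2*n:ℝ)/(2*n+1)
        else if d i = (n:ℤ) ∨ d i = -((n:ℤ)+1) then (1:ℝ)/(2*(n:ℝ)+1) else 0))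
      = D.card * ((2*n:ℝ)/(2*n+1)) + S.card * ((1:ℝ)/(2*(n:ℝ)+1)) := by
    have key : ∀ i ∈ F, (if d i = 0 then (2*n:ℝ)/(2*n+1)
        else if d i = (n:ℤ) ∨ d i = -((n:ℤ)+1) then (1:ℝ)/(2*(n:ℝ)+1) else 0)
        = (if d i = 0 then (2*n:ℝ)/(2*n+1) else 0)
          + (if d i = (n:ℤ) ∨ d i = -((n:ℤ)+1) then (1:ℝ)/(2*(n:ℝ)+1) else 0) := by
      intro i _
      by_cases h0 : d i = 0
      · have hq : ¬ (d i = (n:ℤ) ∨ d i = -((n:ℤ)+1)) := by omega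
        rw [if_pos h0, if_pos h0, if_neg hq, add_zero]
      · rw [if_neg h0, if_neg h0, zero_add]
    rw [Finset.sum_congr rfl key, Finset.sum_add_distrib,
      ← Finset.sum_filter, ← Finset.sum_filter, ← hDdef, ← hSdef]
    simp [Finset.sum_const, nsmul_eq_mul, mul_comm]
  -- membership helpers
  have hDsub : D ⊆ (Finset.range (2*n+1)).image (fun k => 2*k) := by
    intro i hi
    rw [hDdef, Finset.mem_filter, hF, Finset.mem_range] at hi
    obtain ⟨hiF, hi0⟩ := hi
    have hpar := dd_parity hp i (by omega)
    rw [← hd, hi0] at hpar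
    exact Finset.mem_image.mpr ⟨i/2, Finset.mem_range.mpr (by omega), by omega⟩
  have hDcard1 : D.card ≤ 2*n+1 := by
    refine le_trans (Finset.card_le_card hDsub) (le_trans Finset.card_image_le (by simp))
  have hnat : 2*n*D.card + S.card ≤ 2*n*(2*n+1) := by
    by_cases hSe : S = ∅
    · rw [hSe]
      simp only [Finset.card_empty, Nat.add_zero]
      exact Nat.mul_le_mul_left _ hDcard1
    · obtain ⟨i₀, hi₀S⟩ := Finset.nonempty_iff_ne_empty.mpr hSe
      rw [hSdef, Finset.mem_filter, hF, Finset.mem_range] at hi₀S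
      obtain ⟨hi₀F, hdi₀⟩ := hi₀S
      have hw1 : |d i₀ - d 0| ≤ (i₀ : ℤ) := by
        have := dd_lip hp i₀ 0 (by omega); simpa using this
      have hw2 : |d (4*n) - d i₀| ≤ ((4*n - i₀ : ℕ) : ℤ) := by
        have := dd_lip hp (4*n - i₀) i₀ (by omega)
        rwa [Nat.add_sub_cancel' (by omega)] at this
      rw [dz] at hw1
      rw [dend] at hw2
      rw [abs_le] at hw1 hw2
      -- window: n ≤ i₀ ≤ 3n
      have hwin : n ≤ i₀ ∧ i₀ ≤ 3*n := by
        rcases hdi₀ with h | h <;> rw [h] at hw1 hw2 <;> push_cast at hw1 hw2 <;> omega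
      -- the even index e with d e ≠ 0
      have hD2 : D.card ≤ 2*n := by
        set e := if i₀ % 2 = 0 then i₀ else i₀ + 1 with he
        have he4 : e ≤ 4*n ∧ e % 2 = 0 := by rw [he]; split <;> omega
        have hde : d e ≠ 0 := by
          rw [he]
          split
          · rcases hdi₀ with h | h <;> rw [h] <;> intro hc <;> omega
          · have := dd_lip hp 1 i₀ (by omega)
            rw [← hd] at this
            rw [abs_le] at this
            rcases hdi₀ with h | h <;> rw [h] at this <;> intro hc <;>
              rw [hc] at this <;> push_cast at this <;> omega
        have hesub : D ⊆ ((Finset.range (2*n+1)).image (fun k => 2*k)).erase e := by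
          intro i hi
          refine Finset.mem_erase.mpr ⟨?_, hDsub hi⟩
          rw [hDdef, Finset.mem_filter] at hi
          intro hie
          rw [hie] at hi
          exact hde hi.2
        have hemem : e ∈ (Finset.range (2*n+1)).image (fun k => 2*k) :=
          Finset.mem_image.mpr ⟨e/2, Finset.mem_range.mpr (by omega), by omega⟩
        have hcard : (((Finset.range (2*n+1)).image (fun k => 2*k)).erase e).card = 2*n := by
          rw [Finset.card_erase_of_mem hemem,
            Finset.card_image_of_injective _ (fun a b hab => by omega)]
          simp
        calc D.card ≤ _ := Finset.card_le_card hesub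
          _ = 2*n := hcard
      have hS2 : S.card ≤ n + 1 := by
        -- all elements of S have the same type as i₀, and lie in a fixed parity class
        have hsame : ∀ j ∈ S, d j = d i₀ := by
          intro j hj
          rw [hSdef, Finset.mem_filter, hF, Finset.mem_range] at hj
          obtain ⟨hjF, hdj⟩ := hj
          have hw1' : |d j - d 0| ≤ (j : ℤ) := by
            have := dd_lip hp j 0 (by omega); simpa using this
          have hw2' : |d (4*n) - d j| ≤ ((4*n - j : ℕ) : ℤ) := by
            have := dd_lip hp (4*n - j) j (by omega)
            rwa [Nat.add_sub_cancel' (by omega)] at this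
          rw [dz] at hw1'
          rw [dend] at hw2'
          rw [abs_le] at hw1' hw2'
          have hwin' : n ≤ j ∧ j ≤ 3*n := by
            rcases hdj with h | h <;> rw [h] at hw1' hw2' <;> push_cast at hw1' hw2' <;> omega
          have hlipj : |d j - d i₀| ≤ ((2*n : ℕ) : ℤ) ∨ |d i₀ - d j| ≤ ((2*n:ℕ) : ℤ) := by
            by_cases hji : i₀ ≤ j
            · left
              have := dd_lip hp (j - i₀) i₀ (by omega)
              rw [Nat.add_sub_cancel' hji] at this
              exact le_trans this (by push_cast; omega)
            · right
              have := dd_lip hp (i₀ - j) j (by omega)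
              rw [Nat.add_sub_cancel' (by omega)] at this
              exact le_trans this (by push_cast; omega)
          rcases hdj with h | h <;> rcases hdi₀ with h' | h' <;> rw [h, h'] <;>
            first
            | rfl
            | (exfalso
               rw [h, h'] at hlipj
               rcases hlipj with hl | hl <;> rw [abs_le] at hl <;> push_cast at hl <;> omega)
        rcases hdi₀ with htype | htype
        · have hsub : S ⊆ (Finset.range (n+1)).image (fun k => n + 2*k) := by
            intro j hj
            have hdj : d j = (n:ℤ) := by rw [hsame j hj, htype]
            rw [hSdef, Finset.mem_filter, hF, Finset.mem_range] at hj
            obtain ⟨hjF, _⟩ := hj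
            have hpar := dd_parity hp j (by omega)
            rw [← hd, hdj] at hpar
            have hw1' : |d j - d 0| ≤ (j : ℤ) := by
              have := dd_lip hp j 0 (by omega); simpa using this
            have hw2' : |d (4*n) - d j| ≤ ((4*n - j : ℕ) : ℤ) := by
              have := dd_lip hp (4*n - j) j (by omega)
              rwa [Nat.add_sub_cancel' (by omega)] at this
            rw [dz] at hw1'
            rw [dend] at hw2'
            rw [abs_le] at hw1' hw2'
            rw [hdj] at hw1' hw2'
            push_cast at hw1' hw2'
            exact Finset.mem_image.mpr ⟨(j - n)/2, Finset.mem_range.mpr (by omega), by omega⟩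
          calc S.card ≤ _ := Finset.card_le_card hsub
            _ ≤ n + 1 := le_trans Finset.card_image_le (by simp)
        · have hsub : S ⊆ (Finset.range (n+1)).image (fun k => n + 1 + 2*k) := by
            intro j hj
            have hdj : d j = -((n:ℤ)+1) := by rw [hsame j hj, htype]
            rw [hSdef, Finset.mem_filter, hF, Finset.mem_range] at hj
            obtain ⟨hjF, _⟩ := hj
            have hpar := dd_parity hp j (by omega)
            rw [← hd, hdj] at hpar
            have hw1' : |d j - d 0| ≤ (j : ℤ) := by
              have := dd_lip hp j 0 (by omega); simpa using this
            have hw2' : |d (4*n) - d j| ≤ ((4*n - j : ℕ) : ℤ) := by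
              have := dd_lip hp (4*n - j) j (by omega)
              rwa [Nat.add_sub_cancel' (by omega)] at this
            rw [dz] at hw1'
            rw [dend] at hw2'
            rw [abs_le] at hw1' hw2'
            rw [hdj] at hw1' hw2'
            push_cast at hw1' hw2'
            exact Finset.mem_image.mpr ⟨(j - (n+1))/2, Finset.mem_range.mpr (by omega), by omega⟩
          calc S.card ≤ _ := Finset.card_le_card hsub
            _ ≤ n + 1 := le_trans Finset.card_image_le (by simp)
      calc 2*n*D.card + S.card ≤ 2*n*(2*n) + (n+1) :=
            Nat.add_le_add (Nat.mul_le_mul_left _ hD2) hS2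
        _ ≤ 2*n*(2*n) + 2*n := Nat.add_le_add_left (by omega) _
        _ = 2*n*(2*n+1) := by ring
  rw [hsum, hsplit]
  have heq : (D.card : ℝ) * ((2*n:ℝ)/(2*n+1)) + S.card * (1/(2*n+1))
      = ((2*n*D.card + S.card : ℕ) : ℝ)/(2*(n:ℝ)+1) := by
    push_cast
    field_simp
  rw [heq, div_le_iff₀ hm]
  calc ((2*n*D.card + S.card : ℕ) : ℝ) ≤ ((2*n*(2*n+1) : ℕ) : ℝ) := by exact_mod_cast hnat
    _ = (2*n : ℝ) * (2*(n:ℝ)+1) := by push_cast; ring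


def stair (i : ℕ) : ℕ × ℕ := ((i+1)/2, i/2)

lemma stair_path (n : ℕ) : IsLatticePath (2*n+1) stair := by
  refine ⟨rfl, ?_, ?_⟩
  · simp only [stair, Prod.mk.injEq]
    omega
  · intro i hi
    rcases Nat.even_or_odd i with ⟨k, hk⟩ | ⟨k, hk⟩
    · left
      simp only [stair, Prod.mk.injEq]
      omega
    · right
      simp only [stair, Prod.mk.injEq]
      omega

lemma sum_split (g : ℕ → ℝ) : ∀ N, ∑ i ∈ Finset.range (2*N+1), g i
    = ∑ k ∈ Finset.range (N+1), g (2*k) + ∑ k ∈ Finset.range N, g (2*k+1) := by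
  intro N
  induction N with
  | zero => simp
  | succ N ih =>
    have e : 2*(N+1)+1 = (2*N+1)+1+1 := by ring
    rw [e, Finset.sum_range_succ, Finset.sum_range_succ, ih,
      Finset.sum_range_succ (fun k => g (2*k)) (N+1)]
    have e2 : 2*(N+1) = 2*N+1+1 := by ring
    rw [e2, Finset.sum_range_succ (fun k => g (2*k+1)) N]
    ring


lemma struct {n : ℕ} (hn : 2 ≤ n) (Y : Matrix (Fin (2*n+1)) (Fin (2*n+1)) ℝ)
    (hY : InRestrictedBirkhoff (2*n+1) (2*n) Y)
    (hvan : ∀ i j : Fin (2*n+1), j ≠ i → j ≠ i + (n : Fin (2*n+1)) → Y i j = 0) :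
    ∃ β : ℝ, 1/(2*(n:ℝ)+1) ≤ β ∧
      ∀ i j : Fin (2*n+1), Y i j =
        if j = i then 1 - β else if j = i + (n : Fin (2*n+1)) then β else 0 := by
  haveI : NeZero (2*n+1) := ⟨by omega⟩
  obtain ⟨hpos, hrow, hcol, hpath⟩ := hY
  set c : Fin (2*n+1) := (n : Fin (2*n+1)) with hc
  have hcv : (c : ℕ) = n := Fin.val_cast_of_lt (by omega)
  have hc0 : c ≠ 0 := by
    intro h
    have := congrArg Fin.val h
    rw [hcv] at this
    simp at this
    omega
  have hadd : ∀ i : Fin (2*n+1), ((i + c : Fin (2*n+1)) : ℕ) = ((i:ℕ) + n) % (2*n+1) := by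
    intro i
    rw [Fin.val_add, hcv]
  have hnec : ∀ i : Fin (2*n+1), i + c ≠ i := by
    intro i h
    have h2 := congrArg Fin.val h
    rw [hadd] at h2
    have hi := i.isLt
    rcases mod_two_cases ((i:ℕ)+n) (2*n+1) (by omega) (by omega) with ⟨h3, h4⟩ | ⟨h3, h4⟩ <;> omega
  -- row equation
  have hrow2 : ∀ i : Fin (2*n+1), Y i i + Y i (i + c) = 1 := by
    intro i
    rw [← hrow i]
    symm
    refine sum_two i (i+c) (fun h => hnec i h.symm) _ _ _ ?_
    intro x
    by_cases h1 : x = i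
    · rw [if_pos h1, h1]
    · rw [if_neg h1]
      by_cases h2 : x = i + c
      · rw [if_pos h2, h2]
      · rw [if_neg h2]
        exact hvan i x h1 h2
  -- column equation
  have hcol2 : ∀ j : Fin (2*n+1), Y j j + Y (j - c) j = 1 := by
    intro j
    rw [← hcol j]
    symm
    have hne : j ≠ j - c := by
      intro h
      have : j - c + c = j + c := by rw [← h]
      rw [sub_add_cancel] at this
      exact hnec j this.symm
    refine sum_two j (j - c) hne _ _ _ ?_
    intro x
    by_cases h1 : x = j
    · rw [if_pos h1, h1]
    · rw [if_neg h1]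
      by_cases h2 : x = j - c
      · rw [if_pos h2, h2]
      · rw [if_neg h2]
        refine hvan x j (fun h => h1 h.symm) ?_
        intro h
        exact h2 (by rw [h]; rw [add_sub_cancel_right])
  -- shift invariance of the off-diagonal value
  set y' : Fin (2*n+1) → ℝ := fun j => Y j (j + c) with hy'
  have hshift : ∀ j, y' (j + c) = y' j := by
    intro j
    have h1 := hrow2 (j + c)
    have h2 := hcol2 (j + c)
    rw [add_sub_cancel_right] at h2
    have : Y j ((j + c - c) + c) = Y j (j + c) := by rw [add_sub_cancel_right]
    simp only [hy']
    rw [add_sub_cancel_right] at *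
    linarith
  have hsmul : ∀ k : ℕ, ∀ j, y' (j + (k : Fin (2*n+1)) * c) = y' j := by
    intro k
    induction k with
    | zero => intro j; simp
    | succ k ih =>
      intro j
      have e : ((k+1 : ℕ) : Fin (2*n+1)) = (k : Fin (2*n+1)) + 1 := by push_cast; ring
      rw [e, add_mul, one_mul, ← add_assoc, hshift, ih]
  have hconst : ∀ j, y' j = y' 0 := by
    intro j
    have key : ((((2*n-1) * (j:ℕ) : ℕ)) : Fin (2*n+1)) * c = j := by
      have e1 : (2*n-1) * (j:ℕ) * n = (j:ℕ) * (2*n+1) * (n-1) + (j:ℕ) := by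
        have : (2*n-1) * n = (2*n+1) * (n-1) + 1 := by
          cases n with
          | zero => omega
          | succ m =>
            have e3 : 2*(m+1)-1 = 2*m+1 := by omega
            have e4 : (m+1)-1 = m := rfl
            rw [e3, e4]
            ring
        calc (2*n-1) * (j:ℕ) * n = (j:ℕ) * ((2*n-1) * n) := by ring
          _ = (j:ℕ) * ((2*n+1) * (n-1) + 1) := by rw [this]
          _ = (j:ℕ) * (2*n+1) * (n-1) + (j:ℕ) := by ring
      have : ((((2*n-1) * (j:ℕ) : ℕ)) : Fin (2*n+1)) * c
          = ((((2*n-1) * (j:ℕ) * n : ℕ)) : Fin (2*n+1)) := by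
        rw [hc]; push_cast; ring
      rw [this, e1, Nat.cast_add, Nat.cast_mul, Nat.cast_mul, Fin.natCast_self]
      simp [Fin.cast_val_eq_self]
    have := hsmul ((2*n-1) * (j:ℕ)) 0
    rw [zero_add, key] at this
    exact this
  set β : ℝ := y' 0 with hβ
  have hdiag : ∀ j : Fin (2*n+1), Y j j = 1 - β := by
    intro j
    have := hrow2 j
    have h2 : y' j = β := hconst j
    simp only [hy'] at h2
    linarith
  have hoff : ∀ j : Fin (2*n+1), Y j (j + c) = β := by
    intro j
    have h2 : y' j = β := hconst j
    simpa only [hy'] using h2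
  -- staircase path bound
  have hstair := hpath stair (stair_path n)
  have hps : pathSum Y stair = (2*(n:ℝ)+1) * (1 - β) := by
    rw [pathSum]
    have e : 2*(2*n+1) - 1 = 2*(2*n)+1 := by omega
    rw [e, sum_split (fun i => ent Y (stair i)) (2*n)]
    have h1 : ∀ k ∈ Finset.range (2*n+1), ent Y (stair (2*k)) = 1 - β := by
      intro k hk
      rw [Finset.mem_range] at hk
      have hst : stair (2*k) = (k, k) := by simp only [stair, Prod.mk.injEq]; omega
      rw [hst, ent, dif_pos ⟨by omega, by omega⟩]
      exact hdiag ⟨k, by omega⟩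
    have h2 : ∀ k ∈ Finset.range (2*n), ent Y (stair (2*k+1)) = 0 := by
      intro k hk
      rw [Finset.mem_range] at hk
      have hst : stair (2*k+1) = (k+1, k) := by simp only [stair, Prod.mk.injEq]; omega
      rw [hst, ent, dif_pos ⟨by omega, by omega⟩]
      refine hvan ⟨k+1, by omega⟩ ⟨k, by omega⟩ ?_ ?_
      · intro h
        have := congrArg Fin.val h
        simp at this
      · intro h
        have h2 := congrArg Fin.val h
        rw [hadd] at h2
        simp only at h2
        rcases mod_two_cases (k+1+n) (2*n+1) (by omega) (by omega) with ⟨h3, h4⟩ | ⟨h3, h4⟩ <;>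
          omega
    rw [Finset.sum_congr rfl h1, Finset.sum_congr rfl h2, Finset.sum_const, Finset.sum_const,
      Finset.card_range, Finset.card_range]
    push_cast
    ring
  rw [hps] at hstair
  have hm : (0:ℝ) < 2*(n:ℝ)+1 := by positivity
  have hβge : 1/(2*(n:ℝ)+1) ≤ β := by
    rw [div_le_iff₀ hm]
    push_cast at hstair
    nlinarith
  refine ⟨β, hβge, ?_⟩
  intro i j
  by_cases h1 : j = i
  · rw [if_pos h1, h1]; exact hdiag i
  · rw [if_neg h1]
    by_cases h2 : j = i + c
    · rw [if_pos h2, h2]; exact hoff i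
    · rw [if_neg h2]; exact hvan i j h1 h2


lemma xmat_nonneg (n : ℕ) (i j : Fin (2*n+1)) : 0 ≤ Xmat n i j := by
  simp only [Xmat, Matrix.of_apply]
  split_ifs <;> positivity

lemma xmat_row (n : ℕ) (hn : 2 ≤ n) (i : Fin (2*n+1)) : ∑ j, Xmat n i j = 1 := by
  haveI : NeZero (2*n+1) := ⟨by omega⟩
  have hcv : ((n : Fin (2*n+1)) : ℕ) = n := Fin.val_cast_of_lt (by omega)
  have hadd : ∀ i : Fin (2*n+1), ((i + (n : Fin (2*n+1)) : Fin (2*n+1)) : ℕ)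
      = ((i:ℕ) + n) % (2*n+1) := fun i => by rw [Fin.val_add, hcv]
  have hnec : i + (n : Fin (2*n+1)) ≠ i := by
    intro h
    have h2 := congrArg Fin.val h
    rw [hadd] at h2
    have hi := i.isLt
    rcases mod_two_cases ((i:ℕ)+n) (2*n+1) (by omega) (by omega) with ⟨h3, h4⟩ | ⟨h3, h4⟩ <;> omega
  have hf : ∀ x : Fin (2*n+1), Xmat n i x =
      if x = i then (2 * (n:ℝ)) / (2 * (n:ℝ) + 1)
      else if x = i + (n : Fin (2*n+1)) then 1 / (2 * (n:ℝ) + 1) else 0 := by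
    intro x
    have e2 : ((x:ℕ) = ((i:ℕ)+n) % (2*n+1)) ↔ (x = i + (n : Fin (2*n+1))) := by
      rw [← hadd i]
      exact Fin.val_eq_val x _
    simp only [Xmat, Matrix.of_apply, e2, Fin.val_eq_val]
  rw [sum_two i (i + (n : Fin (2*n+1))) (fun h => hnec h.symm) _ _ _ hf]
  have hm : (2*(n:ℝ)+1) ≠ 0 := by positivity
  field_simp

lemma xmat_col (n : ℕ) (hn : 2 ≤ n) (j : Fin (2*n+1)) : ∑ i, Xmat n i j = 1 := by
  haveI : NeZero (2*n+1) := ⟨by omega⟩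
  have hcv : ((n : Fin (2*n+1)) : ℕ) = n := Fin.val_cast_of_lt (by omega)
  have hadd : ∀ i : Fin (2*n+1), ((i + (n : Fin (2*n+1)) : Fin (2*n+1)) : ℕ)
      = ((i:ℕ) + n) % (2*n+1) := fun i => by rw [Fin.val_add, hcv]
  have hnec : ∀ i : Fin (2*n+1), i + (n : Fin (2*n+1)) ≠ i := by
    intro i h
    have h2 := congrArg Fin.val h
    rw [hadd] at h2
    have hi := i.isLt
    rcases mod_two_cases ((i:ℕ)+n) (2*n+1) (by omega) (by omega) with ⟨h3, h4⟩ | ⟨h3, h4⟩ <;> omega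
  have hne : j ≠ j - (n : Fin (2*n+1)) := by
    intro h
    have : j - (n : Fin (2*n+1)) + (n : Fin (2*n+1)) = j + (n : Fin (2*n+1)) := by rw [← h]
    rw [sub_add_cancel] at this
    exact hnec j this.symm
  have hf : ∀ x : Fin (2*n+1), Xmat n x j =
      if x = j then (2 * (n:ℝ)) / (2 * (n:ℝ) + 1)
      else if x = j - (n : Fin (2*n+1)) then 1 / (2 * (n:ℝ) + 1) else 0 := by
    intro x
    have e1 : ((j:ℕ) = (x:ℕ)) ↔ (x = j) := by rw [Fin.val_eq_val]; exact eq_comm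
    have e2 : ((j:ℕ) = ((x:ℕ)+n) % (2*n+1)) ↔ (x = j - (n : Fin (2*n+1))) := by
      rw [← hadd x, Fin.val_eq_val]
      constructor
      · intro h
        rw [eq_sub_iff_add_eq]
        exact h.symm
      · intro h
        rw [h, sub_add_cancel]
    simp only [Xmat, Matrix.of_apply, e1, e2]
  rw [sum_two j (j - (n : Fin (2*n+1))) hne _ _ _ hf]
  have hm : (2*(n:ℝ)+1) ≠ 0 := by positivity
  field_simp

end BigDenom

theorem big_denominator_vertex_aux (n : ℕ) (hn : 2 ≤ n) :
    InRestrictedBirkhoff (2 * n + 1) (2 * n) (BigDenom.Xmat n) ∧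
    ∀ Y Z : Matrix (Fin (2 * n + 1)) (Fin (2 * n + 1)) ℝ,
      InRestrictedBirkhoff (2 * n + 1) (2 * n) Y →
      InRestrictedBirkhoff (2 * n + 1) (2 * n) Z →
      BigDenom.Xmat n = (1 / 2 : ℝ) • (Y + Z) → Y = Z := by
  haveI : NeZero (2*n+1) := ⟨by omega⟩
  have hcv : ((n : Fin (2*n+1)) : ℕ) = n := Fin.val_cast_of_lt (by omega)
  have hadd : ∀ i : Fin (2*n+1), ((i + (n : Fin (2*n+1)) : Fin (2*n+1)) : ℕ)
      = ((i:ℕ) + n) % (2*n+1) := fun i => by rw [Fin.val_add, hcv]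
  constructor
  · refine ⟨BigDenom.xmat_nonneg n, BigDenom.xmat_row n hn, BigDenom.xmat_col n hn, ?_⟩
    intro p hp
    have h := BigDenom.xmat_pathSum hn hp
    calc pathSum (BigDenom.Xmat n) p ≤ (2*(n:ℝ)) := h
      _ = ((2*n : ℕ) : ℝ) := by push_cast; ring
  · intro Y Z hY hZ hXeq
    have hXentry : ∀ i j, BigDenom.Xmat n i j = (1/2:ℝ) * (Y i j + Z i j) := by
      intro i j
      have h := congrFun (congrFun hXeq i) j
      simpa [Matrix.smul_apply, Matrix.add_apply, smul_eq_mul] using h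
    have hvanYZ : ∀ i j : Fin (2*n+1), j ≠ i → j ≠ i + (n : Fin (2*n+1)) →
        Y i j = 0 ∧ Z i j = 0 := by
      intro i j h1 h2
      have hx := hXentry i j
      have hz : BigDenom.Xmat n i j = 0 := by
        show (if (j : ℕ) = (i : ℕ) then (2 * (n:ℕ) : ℝ) / (2 * (n:ℕ) + 1)
          else if (j : ℕ) = ((i : ℕ) + n) % (2 * n + 1) then 1 / (2 * (n:ℕ) + 1) else 0) = 0
        rw [if_neg (fun h => h1 (Fin.val_injective h)),
          if_neg (fun h => h2 (Fin.val_injective (by rw [hadd i]; exact h)))]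
      rw [hz] at hx
      have hY1 := hY.1 i j
      have hZ1 := hZ.1 i j
      constructor <;> linarith
    obtain ⟨βY, hβY, hfY⟩ := BigDenom.struct hn Y hY (fun i j h1 h2 => (hvanYZ i j h1 h2).1)
    obtain ⟨βZ, hβZ, hfZ⟩ := BigDenom.struct hn Z hZ (fun i j h1 h2 => (hvanYZ i j h1 h2).2)
    have hn0v : (((0:Fin (2*n+1)) + (n : Fin (2*n+1)) : Fin (2*n+1)) : ℕ)
        ≠ (((0:Fin (2*n+1))) : ℕ) := by
      rw [hadd 0]
      simp only [Fin.val_zero, Nat.zero_add]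
      rw [Nat.mod_eq_of_lt (by omega)]
      omega
    have hne0 : (0 : Fin (2*n+1)) + (n : Fin (2*n+1)) ≠ 0 :=
      fun h => hn0v (congrArg Fin.val h)
    have hkey := hXentry 0 (0 + (n : Fin (2*n+1)))
    have hx0 : BigDenom.Xmat n 0 (0 + (n : Fin (2*n+1))) = 1 / (2*(n:ℝ)+1) := by
      show (if ((0 + (n : Fin (2*n+1)) : Fin (2*n+1)) : ℕ) = ((0 : Fin (2*n+1)) : ℕ)
          then (2 * (n:ℕ) : ℝ) / (2 * (n:ℕ) + 1)
          else if ((0 + (n : Fin (2*n+1)) : Fin (2*n+1)) : ℕ)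
            = (((0 : Fin (2*n+1)) : ℕ) + n) % (2 * n + 1) then 1 / (2 * (n:ℕ) + 1) else 0)
          = 1 / (2*(n:ℝ)+1)
      rw [if_neg hn0v, if_pos (hadd 0)]
    rw [hx0, hfY 0 (0 + (n : Fin (2*n+1))), hfZ 0 (0 + (n : Fin (2*n+1))),
      if_neg hne0, if_pos rfl, if_neg hne0, if_pos rfl] at hkey
    have hββ : βY = βZ := by linarith
    ext i j
    rw [hfY i j, hfZ i j, hββ]

/-- For `n ≥ 2`, the `(2n+1) × (2n+1)` matrix with `2n/(2n+1)` on the main diagonal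
and `1/(2n+1)` on the diagonal shifted by `n` (mod `2n+1`) is a vertex of
`B_{2n+1}^{2n}`. -/
theorem big_denominator_vertex (n : ℕ) (hn : 2 ≤ n) :
    InRestrictedBirkhoff (2 * n + 1) (2 * n)
      (Matrix.of fun i j : Fin (2 * n + 1) =>
        if (j : ℕ) = (i : ℕ) then (2 * n : ℝ) / (2 * n + 1)
        else if (j : ℕ) = ((i : ℕ) + n) % (2 * n + 1) then 1 / (2 * n + 1) else 0) ∧
    ∀ Y Z : Matrix (Fin (2 * n + 1)) (Fin (2 * n + 1)) ℝ,
      InRestrictedBirkhoff (2 * n + 1) (2 * n) Y →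
      InRestrictedBirkhoff (2 * n + 1) (2 * n) Z →
      (Matrix.of fun i j : Fin (2 * n + 1) =>
        if (j : ℕ) = (i : ℕ) then (2 * n : ℝ) / (2 * n + 1)
        else if (j : ℕ) = ((i : ℕ) + n) % (2 * n + 1) then 1 / (2 * n + 1) else 0)
        = (1 / 2 : ℝ) • (Y + Z) → Y = Z := by
  exact big_denominator_vertex_aux n hn
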